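/- A radial weight ω belongs to Ď if and only if there exist constants C > 0 and α₀ > 0 such that for all α ∈ (0, α₀], ω̂(t) ≤ C ((1-t)/(1-r))^α ω̂(r) for all 0 ≤ r ≤ t < 1. -/

import Mathlib

open MeasureTheory

/-- The tail integral of a radial weight. -/
noncomputable def hat (ω : ℝ → ℝ) (r : ℝ) : ℝ := ∫ s in r..1, ω s

/-- The class Ď of radial weights. -/
def Dcheck (ω : ℝ → ℝ) : Prop :=
  ∃ K > 1, ∃ C > 1, ∀ r ∈ Set.Ico (0:ℝ) 1, C * hat ω (1 - (1 - r) / K) ≤ hat ω r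

lemma hat_anti (ω : ℝ → ℝ)
    (hω_nonneg : ∀ r ∈ Set.Ico (0:ℝ) 1, 0 ≤ ω r)
    (hω_int : IntervalIntegrable ω volume 0 1)
    {r t : ℝ} (hr : 0 ≤ r) (hrt : r ≤ t) (ht : t < 1) :
    hat ω t ≤ hat ω r := by
  have ht1 : t ≤ 1 := ht.le
  have h1 : IntervalIntegrable ω volume r t :=
    hω_int.mono_set (Set.uIcc_subset_uIcc
      (Set.mem_uIcc.2 (Or.inl ⟨hr, le_trans hrt ht1⟩))
      (Set.mem_uIcc.2 (Or.inl ⟨le_trans hr hrt, ht1⟩)))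
  have h2 : IntervalIntegrable ω volume t 1 :=
    hω_int.mono_set (Set.uIcc_subset_uIcc
      (Set.mem_uIcc.2 (Or.inl ⟨le_trans hr hrt, ht1⟩))
      (Set.mem_uIcc.2 (Or.inl ⟨zero_le_one, le_refl (1:ℝ)⟩)))
  have key : (∫ s in r..t, ω s) + hat ω t = hat ω r :=
    intervalIntegral.integral_add_adjacent_intervals h1 h2
  have hnn : 0 ≤ ∫ s in r..t, ω s := by
    apply intervalIntegral.integral_nonneg hrt
    intro x hx
    exact hω_nonneg x ⟨le_trans hr hx.1, lt_of_le_of_lt hx.2 ht⟩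
  linarith

lemma hat_iter (ω : ℝ → ℝ) {K C : ℝ} (hK : 1 < K) (hC : 1 < C)
    (h : ∀ r ∈ Set.Ico (0:ℝ) 1, C * hat ω (1 - (1 - r) / K) ≤ hat ω r) :
    ∀ n : ℕ, ∀ r ∈ Set.Ico (0:ℝ) 1, C ^ n * hat ω (1 - (1 - r) / K ^ n) ≤ hat ω r := by
  intro n
  induction n with
  | zero => intro r hr; simp
  | succ n ih =>
    intro r hr
    have hKpos : (0:ℝ) < K := lt_trans one_pos hK
    have hKn : (1:ℝ) ≤ K ^ n := one_le_pow₀ hK.le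
    have hKnpos : (0:ℝ) < K ^ n := pow_pos hKpos n
    have hr1 : (0:ℝ) < 1 - r := by linarith [hr.2]
    have hrn : (1 - (1 - r) / K ^ n) ∈ Set.Ico (0:ℝ) 1 := by
      constructor
      · have : (1 - r) / K ^ n ≤ 1 - r := by
          rw [div_le_iff₀ hKnpos]; nlinarith [hr.1]
        linarith [hr.1]
      · have : 0 < (1 - r) / K ^ n := div_pos hr1 hKnpos
        linarith
    have step := h _ hrn
    have heq : 1 - (1 - (1 - (1 - r) / K ^ n)) / K = 1 - (1 - r) / K ^ (n + 1) := by
      rw [pow_succ]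
      field_simp
      ring
    rw [heq] at step
    have hCn : (0:ℝ) ≤ C ^ n := (pow_pos (lt_trans one_pos hC) n).le
    calc C ^ (n + 1) * hat ω (1 - (1 - r) / K ^ (n + 1))
        = C ^ n * (C * hat ω (1 - (1 - r) / K ^ (n + 1))) := by ring
      _ ≤ C ^ n * hat ω (1 - (1 - r) / K ^ n) := mul_le_mul_of_nonneg_left step hCn
      _ ≤ hat ω r := ih r hr

theorem Dcheck_iff_pointwise (ω : ℝ → ℝ)
    (hω_nonneg : ∀ r ∈ Set.Ico (0:ℝ) 1, 0 ≤ ω r)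
    (hω_int : IntervalIntegrable ω volume 0 1)
    (hω_pos : ∀ r ∈ Set.Ico (0:ℝ) 1, 0 < hat ω r) :
    Dcheck ω ↔
      ∃ C > 0, ∃ α₀ > 0, ∀ α ∈ Set.Ioc (0:ℝ) α₀, ∀ r t : ℝ, 0 ≤ r → r ≤ t → t < 1 →
        hat ω t ≤ C * ((1 - t) / (1 - r)) ^ α * hat ω r := by
  constructor
  · rintro ⟨K, hK, C, hC, h⟩
    have hKpos : (0:ℝ) < K := lt_trans one_pos hK
    have hCpos : (0:ℝ) < C := lt_trans one_pos hC
    set α₀ : ℝ := Real.logb K C with hα₀def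
    have hα₀pos : 0 < α₀ := Real.logb_pos hK hC
    have hKα₀ : K ^ α₀ = C := Real.rpow_logb hKpos (ne_of_gt hK) hCpos
    refine ⟨C, hCpos, α₀, hα₀pos, ?_⟩
    rintro α ⟨hα0, hαα₀⟩ r t hr hrt ht
    have hr1 : r < 1 := lt_of_le_of_lt hrt ht
    have h1r : (0:ℝ) < 1 - r := by linarith
    have h1t : (0:ℝ) < 1 - t := by linarith
    set x : ℝ := (1 - r) / (1 - t) with hxdef
    have hx1 : 1 ≤ x := (one_le_div h1t).2 (by linarith)
    have hxpos : 0 < x := lt_of_lt_of_le one_pos hx1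
    set n : ℕ := ⌊Real.logb K x⌋₊ with hndef
    have hlogb_nonneg : 0 ≤ Real.logb K x := Real.logb_nonneg hK hx1
    have hKn_le : (K : ℝ) ^ (n : ℝ) ≤ x := by
      rw [← Real.rpow_logb hKpos (ne_of_gt hK) hxpos]
      exact (Real.rpow_le_rpow_left_iff hK).2 (Nat.floor_le hlogb_nonneg)
    have hx_lt : x < K ^ ((n : ℝ) + 1) := by
      conv_lhs => rw [← Real.rpow_logb hKpos (ne_of_gt hK) hxpos]
      exact (Real.rpow_lt_rpow_left_iff hK).2 (Nat.lt_floor_add_one _)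
    have hKn_pow : ((K : ℝ) ^ n : ℝ) = (K : ℝ) ^ (n : ℝ) := (Real.rpow_natCast K n).symm
    have hKnpos : (0:ℝ) < K ^ n := pow_pos hKpos n
    have hrn_le_t : 1 - (1 - r) / K ^ n ≤ t := by
      have hge : 1 - t ≤ (1 - r) / K ^ n := by
        rw [le_div_iff₀ hKnpos]
        have hle : (K:ℝ) ^ n ≤ x := by rw [hKn_pow]; exact hKn_le
        calc (1 - t) * K ^ n ≤ (1 - t) * x := by nlinarith
          _ = 1 - r := by rw [hxdef]; field_simp
      linarith
    have hrmem : r ∈ Set.Ico (0:ℝ) 1 := ⟨hr, hr1⟩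
    have hiter := hat_iter ω hK hC h n r hrmem
    have hrn_mem0 : 0 ≤ 1 - (1 - r) / K ^ n := by
      have h1 : (1 - r) / K ^ n ≤ 1 - r := by
        rw [div_le_iff₀ hKnpos]
        nlinarith [one_le_pow₀ hK.le (n := n)]
      linarith
    have hmono := hat_anti ω hω_nonneg hω_int hrn_mem0 hrn_le_t ht
    have hCnpos : (0:ℝ) < C ^ n := pow_pos hCpos n
    have hhatr_pos := hω_pos r hrmem
    have key1 : C ^ n * hat ω t ≤ hat ω r :=
      calc C ^ n * hat ω t ≤ C ^ n * hat ω (1 - (1 - r) / K ^ n) :=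
            mul_le_mul_of_nonneg_left hmono hCnpos.le
        _ ≤ hat ω r := hiter
    -- now the power estimate: 1 / C^n ≤ C * y^α with y = (1-t)/(1-r)
    set y : ℝ := (1 - t) / (1 - r) with hydef
    have hy_inv : y = x⁻¹ := by rw [hydef, hxdef, inv_div]
    have hypos : 0 < y := div_pos h1t h1r
    have hy1 : y ≤ 1 := by
      rw [hy_inv]
      exact inv_le_one_of_one_le₀ hx1
    have hCn_eq : (C : ℝ) ^ n = ((K : ℝ) ^ (n:ℝ)) ^ α₀ := by
      rw [← hKα₀, ← Real.rpow_natCast (K ^ α₀) n, ← Real.rpow_mul hKpos.le,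
        ← Real.rpow_mul hKpos.le, mul_comm]
    have hxK : x / K ≤ (K:ℝ) ^ (n:ℝ) := by
      rw [div_le_iff₀ hKpos]
      calc x ≤ K ^ ((n:ℝ) + 1) := hx_lt.le
        _ = K ^ (n:ℝ) * K := by rw [Real.rpow_add hKpos, Real.rpow_one]
    have hxKpos : 0 < x / K := div_pos hxpos hKpos
    have hge2 : ((x / K) : ℝ) ^ α₀ ≤ (C:ℝ) ^ n := by
      rw [hCn_eq]
      exact Real.rpow_le_rpow hxKpos.le hxK hα₀pos.le
    have hxKα₀pos : 0 < ((x / K) : ℝ) ^ α₀ := Real.rpow_pos_of_pos hxKpos _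
    have hinv : 1 / (C:ℝ) ^ n ≤ 1 / ((x / K) : ℝ) ^ α₀ :=
      one_div_le_one_div_of_le hxKα₀pos hge2
    have hKx_eq : 1 / ((x / K) : ℝ) ^ α₀ = C * y ^ α₀ := by
      rw [Real.div_rpow hxpos.le hKpos.le, hKα₀, one_div_div, hy_inv,
        Real.inv_rpow hxpos.le, div_eq_mul_inv]
    have h3 : 1 / (C:ℝ) ^ n ≤ C * y ^ α₀ := hKx_eq ▸ hinv
    have hstep1 : hat ω t ≤ hat ω r / C ^ n :=
      (le_div_iff₀ hCnpos).2 (by linarith [key1, mul_comm (hat ω t) ((C:ℝ) ^ n)])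
    have h2 : hat ω r / C ^ n ≤ C * y ^ α₀ * hat ω r := by
      rw [div_eq_mul_inv, mul_comm, ← one_div]
      exact mul_le_mul_of_nonneg_right h3 hhatr_pos.le
    have hyexp : y ^ α₀ ≤ y ^ α := Real.rpow_le_rpow_of_exponent_ge hypos hy1 hαα₀
    have h4 : C * y ^ α₀ * hat ω r ≤ C * y ^ α * hat ω r :=
      mul_le_mul_of_nonneg_right (mul_le_mul_of_nonneg_left hyexp hCpos.le) hhatr_pos.le
    exact le_trans hstep1 (le_trans h2 h4)
  · rintro ⟨C, hCpos, α₀, hα₀pos, h⟩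
    set K : ℝ := max 2 ((2 * C) ^ (1 / α₀)) with hKdef
    have hK2 : (2:ℝ) ≤ K := le_max_left _ _
    have hK1 : (1:ℝ) < K := lt_of_lt_of_le one_lt_two hK2
    have hKpos : (0:ℝ) < K := lt_trans one_pos hK1
    refine ⟨K, hK1, 2, one_lt_two, ?_⟩
    intro r hr
    have h1r : (0:ℝ) < 1 - r := by linarith [hr.2]
    set t : ℝ := 1 - (1 - r) / K with htdef
    have hrt : r ≤ t := by
      have : (1 - r) / K ≤ 1 - r := by
        rw [div_le_iff₀ hKpos]; nlinarith
      simp only [htdef]; linarith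
    have ht1 : t < 1 := by
      have : 0 < (1 - r) / K := div_pos h1r hKpos
      simp only [htdef]; linarith
    have happ := h α₀ ⟨hα₀pos, le_refl _⟩ r t hr.1 hrt ht1
    have hfrac : (1 - t) / (1 - r) = 1 / K := by
      simp only [htdef]
      field_simp
      ring
    rw [hfrac] at happ
    have h2C : (0:ℝ) < 2 * C := by positivity
    have hKα : (2 * C) ≤ K ^ α₀ := by
      calc (2*C) = ((2*C) ^ (1/α₀)) ^ α₀ := by
            rw [← Real.rpow_mul h2C.le, one_div, inv_mul_cancel₀ (ne_of_gt hα₀pos),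
              Real.rpow_one]
        _ ≤ K ^ α₀ := Real.rpow_le_rpow (Real.rpow_nonneg h2C.le _) (le_max_right _ _)
            hα₀pos.le
    have hKα₀pos : (0:ℝ) < K ^ α₀ := Real.rpow_pos_of_pos hKpos _
    have hbound : C * (1 / K) ^ α₀ ≤ 1 / 2 := by
      rw [one_div, Real.inv_rpow hKpos.le, ← div_eq_mul_inv, div_le_iff₀ hKα₀pos]
      linarith
    have hhatr := hω_pos r hr
    have hmul : C * (1 / K) ^ α₀ * hat ω r ≤ (1 / 2) * hat ω r :=
      mul_le_mul_of_nonneg_right hbound hhatr.le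
    linarith
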